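/- Let $\gamma : [0,\ell] \to \mathbb{R}^2$, $\gamma(t) = (f_1(t), f_2(t))$, be a $C^1$ curve with $f_1(0) = f_2(0) = f_1(\ell) = f_2(\ell) = 0$, regular ($\dot\gamma \neq 0$), whose tangent argument $\phi$ is monotone with $|\phi(\ell) - \phi(0)| \leq 2\pi$. Then for every nonzero $\vec\alpha \in \mathbb{R}^2$ there do NOT exist points $0 \le t_1 < t_2 < t_3 < t_4 \le \ell$ and $c \in \mathbb{R}$ such that, with $g(t) = \vec\alpha \cdot \gamma(t)$, one has $g(t_1) > c$, $g(t_2) < c$, $g(t_3) > c$, $g(t_4) < c$. -/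

import Mathlib

open Real Set


theorem cos_four_alt_aux {x1 x2 x3 x4 : ℝ} (h12 : x1 ≤ x2) (h23 : x2 ≤ x3)
    (h34 : x3 ≤ x4) (hspan : x4 - x1 ≤ 2 * π)
    (h1 : 0 < Real.cos x1) (h2 : Real.cos x2 < 0)
    (h3 : 0 < Real.cos x3) (h4 : Real.cos x4 < 0) : False := by
  set k : ℤ := ⌊(x1 + π / 2) / (2 * π)⌋ with hk
  have h2pi : (0:ℝ) < 2 * π := by positivity
  have hfl := Int.sub_floor_div_mul_nonneg (x1 + π / 2) h2pi
  have hfl' := Int.sub_floor_div_mul_lt (x1 + π / 2) h2pi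
  set y1 := x1 - k * (2 * π) with hy1
  set y2 := x2 - k * (2 * π) with hy2
  set y3 := x3 - k * (2 * π) with hy3
  set y4 := x4 - k * (2 * π) with hy4
  have c1 : 0 < Real.cos y1 := by rwa [hy1, Real.cos_sub_int_mul_two_pi]
  have c2 : Real.cos y2 < 0 := by rwa [hy2, Real.cos_sub_int_mul_two_pi]
  have c3 : 0 < Real.cos y3 := by rwa [hy3, Real.cos_sub_int_mul_two_pi]
  have c4 : Real.cos y4 < 0 := by rwa [hy4, Real.cos_sub_int_mul_two_pi]
  have hy1lb : -(π/2) ≤ y1 := by rw [hy1]; linarith [hfl]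
  have hy1ub : y1 < 3 * π / 2 := by rw [hy1]; linarith [hfl']
  have hy1half : y1 < π / 2 := by
    by_contra h
    push_neg at h
    have hc : Real.cos y1 ≤ 0 :=
      Real.cos_nonpos_of_pi_div_two_le_of_le h (by linarith)
    linarith
  have hy2half : π / 2 < y2 := by
    by_contra h
    push_neg at h
    have : 0 ≤ Real.cos y2 := Real.cos_nonneg_of_mem_Icc ⟨by simp only [hy2, hy1] at *; linarith, h⟩
    linarith
  have hy3half : 3 * π / 2 < y3 := by
    by_contra h
    push_neg at h
    have h2le3 : y2 ≤ y3 := by simp only [hy2, hy3]; linarith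
    have hc : Real.cos y3 ≤ 0 :=
      Real.cos_nonpos_of_pi_div_two_le_of_le (by linarith) (by linarith)
    linarith
  have hy4half : 5 * π / 2 < y4 := by
    by_contra h
    push_neg at h
    have h3le4 : y3 ≤ y4 := by simp only [hy3, hy4]; linarith
    have heq : Real.cos (y4 - (1:ℤ) * (2 * π)) = Real.cos y4 := Real.cos_sub_int_mul_two_pi _ _
    have : 0 ≤ Real.cos y4 := by
      rw [← heq]
      exact Real.cos_nonneg_of_mem_Icc ⟨by push_cast; linarith, by push_cast; linarith⟩
    linarith
  have : y4 - y1 ≤ 2 * π := by simp only [hy1, hy4]; linarith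
  linarith

theorem cos_four_alt_aux' {x1 x2 x3 x4 : ℝ} (h12 : x1 ≤ x2) (h23 : x2 ≤ x3)
    (h34 : x3 ≤ x4) (hspan : x4 - x1 ≤ 2 * π)
    (h1 : Real.cos x1 < 0) (h2 : 0 < Real.cos x2)
    (h3 : Real.cos x3 < 0) (h4 : 0 < Real.cos x4) : False := by
  refine cos_four_alt_aux (x1 := x1 + π) (x2 := x2 + π) (x3 := x3 + π) (x4 := x4 + π)
    (by linarith) (by linarith) (by linarith) (by linarith) ?_ ?_ ?_ ?_ <;>
    rw [Real.cos_add_pi] <;> linarith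

/-- One-dimensional lemma behind the limited-view Jacobian theorem, case (a): a closed
regular `C¹` curve starting and ending at the origin whose tangent argument is monotone
with total variation at most `2π` admits no level `c` about which `g = α ⬝ γ` alternates
four times. -/
theorem no_four_alternations_turn_le_two_pi (ℓ : ℝ) (hℓ : 0 < ℓ)
    (γ γ' : ℝ → ℝ × ℝ) (r φ : ℝ → ℝ)
    (hderiv : ∀ t ∈ Icc 0 ℓ, HasDerivAt γ (γ' t) t)
    (hcont : ContinuousOn γ' (Icc 0 ℓ))
    (hreg : ∀ t ∈ Icc 0 ℓ, γ' t ≠ 0)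
    (hr : ∀ t ∈ Icc 0 ℓ, r t = ‖γ' t‖)
    (hφcont : ContinuousOn φ (Icc 0 ℓ))
    (hpolar : ∀ t ∈ Icc 0 ℓ, γ' t = (r t * Real.cos (φ t), r t * Real.sin (φ t)))
    (hmono : MonotoneOn φ (Icc 0 ℓ) ∨ AntitoneOn φ (Icc 0 ℓ))
    (hvar : |φ ℓ - φ 0| ≤ 2 * Real.pi)
    (hγ0 : γ 0 = (0, 0)) (hγℓ : γ ℓ = (0, 0))
    (a : ℝ × ℝ) (ha : a ≠ 0)
    (g : ℝ → ℝ) (hg : ∀ t, g t = a.1 * (γ t).1 + a.2 * (γ t).2) :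
    ¬ ∃ t1 t2 t3 t4 c : ℝ, 0 ≤ t1 ∧ t1 < t2 ∧ t2 < t3 ∧ t3 < t4 ∧ t4 ≤ ℓ ∧
        c < g t1 ∧ g t2 < c ∧ c < g t3 ∧ g t4 < c := by
  rintro ⟨t1, t2, t3, t4, c, h0t1, h12, h23, h34, ht4ℓ, hg1, hg2, hg3, hg4⟩
  -- the complex number associated to a, and its argument
  set z : ℂ := ⟨a.1, a.2⟩ with hz
  have hzne : z ≠ 0 := by
    intro h
    apply ha
    have h1 : z.re = 0 := by rw [h]; simp
    have h2 : z.im = 0 := by rw [h]; simp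
    exact Prod.ext h1 h2
  have habs : 0 < ‖z‖ := by
    exact norm_pos_iff.2 hzne
  set β : ℝ := Complex.arg z with hβ
  have ha1 : a.1 = ‖z‖ * Real.cos β := by
    rw [hβ, Complex.cos_arg hzne]
    field_simp
    rfl
  have ha2 : a.2 = ‖z‖ * Real.sin β := by
    rw [hβ, Complex.sin_arg]
    field_simp
    rfl
  -- derivative of g
  set G' : ℝ → ℝ := fun t => a.1 * (γ' t).1 + a.2 * (γ' t).2 with hG'
  have hgeq : g = fun t => a.1 * (γ t).1 + a.2 * (γ t).2 := funext hg
  have hGderiv : ∀ t ∈ Icc 0 ℓ, HasDerivAt g (G' t) t := by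
    intro t ht
    rw [hgeq]
    have h1 : HasDerivAt (fun t => (γ t).1) (γ' t).1 t :=
      ((ContinuousLinearMap.fst ℝ ℝ ℝ).hasFDerivAt.comp_hasDerivAt t (hderiv t ht))
    have h2 : HasDerivAt (fun t => (γ t).2) (γ' t).2 t :=
      ((ContinuousLinearMap.snd ℝ ℝ ℝ).hasFDerivAt.comp_hasDerivAt t (hderiv t ht))
    exact (h1.const_mul a.1).add (h2.const_mul a.2)
  -- expression of G' via cos
  have hGcos : ∀ t ∈ Icc 0 ℓ, G' t = (r t * ‖z‖) * Real.cos (φ t - β) := by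
    intro t ht
    rw [hG']
    simp only
    rw [hpolar t ht, ha1, ha2, Real.cos_sub]
    ring
  have hrpos : ∀ t ∈ Icc 0 ℓ, 0 < r t := by
    intro t ht
    rw [hr t ht]
    exact norm_pos_iff.2 (hreg t ht)
  have hGpos : ∀ t ∈ Icc 0 ℓ, 0 < G' t → 0 < Real.cos (φ t - β) := by
    intro t ht h
    rw [hGcos t ht] at h
    by_contra hc
    push_neg at hc
    have hk : 0 < r t * ‖z‖ := mul_pos (hrpos t ht) habs
    have := mul_nonpos_of_nonneg_of_nonpos hk.le hc
    linarith
  have hGneg : ∀ t ∈ Icc 0 ℓ, G' t < 0 → Real.cos (φ t - β) < 0 := by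
    intro t ht h
    rw [hGcos t ht] at h
    by_contra hc
    push_neg at hc
    have hk : 0 < r t * ‖z‖ := mul_pos (hrpos t ht) habs
    have := mul_nonneg hk.le hc
    linarith
  have hgcont : ContinuousOn g (Icc 0 ℓ) := fun t ht =>
    (hGderiv t ht).continuousAt.continuousWithinAt
  -- MVT helper
  have mvt : ∀ u v : ℝ, 0 ≤ u → v ≤ ℓ → u < v →
      ∃ s ∈ Ioo u v, G' s = (g v - g u) / (v - u) := by
    intro u v hu hv huv
    have hsub : Icc u v ⊆ Icc 0 ℓ := Icc_subset_Icc hu hv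
    exact exists_hasDerivAt_eq_slope g G' huv (hgcont.mono hsub)
      (fun x hx => hGderiv x (hsub ⟨hx.1.le, hx.2.le⟩))
  have hg0 : g 0 = 0 := by rw [hg, hγ0]; simp
  have hgℓ : g ℓ = 0 := by rw [hg, hγℓ]; simp
  have ht1ℓ : t1 ≤ ℓ := by linarith
  have ht2ℓ : t2 ≤ ℓ := by linarith
  have ht3ℓ : t3 ≤ ℓ := by linarith
  have h0t2 : 0 ≤ t2 := by linarith
  have h0t3 : 0 ≤ t3 := by linarith
  have h0t4 : 0 ≤ t4 := by linarith
  -- generic finishing move given four points with alternating cos signs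
  have finish : ∀ s1 s2 s3 s4 : ℝ, s1 ∈ Icc 0 ℓ → s2 ∈ Icc 0 ℓ → s3 ∈ Icc 0 ℓ → s4 ∈ Icc 0 ℓ →
      s1 ≤ s2 → s2 ≤ s3 → s3 ≤ s4 →
      0 < Real.cos (φ s1 - β) → Real.cos (φ s2 - β) < 0 →
      0 < Real.cos (φ s3 - β) → Real.cos (φ s4 - β) < 0 → False := by
    intro s1 s2 s3 s4 hs1 hs2 hs3 hs4 h12' h23' h34' c1 c2 c3 c4
    have h0m : (0:ℝ) ∈ Icc 0 ℓ := ⟨le_refl _, hℓ.le⟩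
    have hℓm : ℓ ∈ Icc 0 ℓ := ⟨hℓ.le, le_refl _⟩
    rcases hmono with hm | hm
    · refine cos_four_alt_aux (x1 := φ s1 - β) (x2 := φ s2 - β) (x3 := φ s3 - β)
        (x4 := φ s4 - β) ?_ ?_ ?_ ?_ c1 c2 c3 c4
      · linarith [hm hs1 hs2 h12']
      · linarith [hm hs2 hs3 h23']
      · linarith [hm hs3 hs4 h34']
      · have h1 := hm h0m hs1 hs1.1
        have h2 := hm hs4 hℓm hs4.2
        have h3 : φ ℓ - φ 0 ≤ 2 * π := le_trans (le_abs_self _) hvar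
        linarith
    · have ce : ∀ s : ℝ, Real.cos (β - φ s) = Real.cos (φ s - β) := by
        intro s; rw [← Real.cos_neg, neg_sub]
      refine cos_four_alt_aux (x1 := β - φ s1) (x2 := β - φ s2) (x3 := β - φ s3)
        (x4 := β - φ s4) ?_ ?_ ?_ ?_ ?_ ?_ ?_ ?_
      · linarith [hm hs1 hs2 h12']
      · linarith [hm hs2 hs3 h23']
      · linarith [hm hs3 hs4 h34']
      · have h1 := hm h0m hs1 hs1.1
        have h2 := hm hs4 hℓm hs4.2
        have h3 : -(φ ℓ - φ 0) ≤ 2 * π := le_trans (neg_le_abs _) hvar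
        linarith
      · rw [ce]; exact c1
      · rw [ce]; exact c2
      · rw [ce]; exact c3
      · rw [ce]; exact c4
  rcases le_or_gt 0 c with hc | hc
  · -- c ≥ 0 : use segment (0, t1)
    have ht1pos : 0 < t1 := by
      rcases lt_or_eq_of_le h0t1 with h | h
      · exact h
      · exfalso; rw [← h, hg0] at hg1; linarith
    obtain ⟨s1, hs1, he1⟩ := mvt 0 t1 le_rfl ht1ℓ ht1pos
    obtain ⟨s2, hs2, he2⟩ := mvt t1 t2 h0t1 ht2ℓ h12
    obtain ⟨s3, hs3, he3⟩ := mvt t2 t3 h0t2 ht3ℓ h23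
    obtain ⟨s4, hs4, he4⟩ := mvt t3 t4 h0t3 ht4ℓ h34
    have hs1m : s1 ∈ Icc 0 ℓ := ⟨hs1.1.le, by linarith [hs1.2]⟩
    have hs2m : s2 ∈ Icc 0 ℓ := ⟨by linarith [hs2.1], by linarith [hs2.2]⟩
    have hs3m : s3 ∈ Icc 0 ℓ := ⟨by linarith [hs3.1], by linarith [hs3.2]⟩
    have hs4m : s4 ∈ Icc 0 ℓ := ⟨by linarith [hs4.1], by linarith [hs4.2]⟩
    refine finish s1 s2 s3 s4 hs1m hs2m hs3m hs4m
      (by linarith [hs1.2, hs2.1]) (by linarith [hs2.2, hs3.1]) (by linarith [hs3.2, hs4.1])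
      ?_ ?_ ?_ ?_
    · refine hGpos s1 hs1m ?_
      rw [he1]
      apply div_pos (by rw [hg0]; linarith) (by linarith)
    · refine hGneg s2 hs2m ?_
      rw [he2]
      apply div_neg_of_neg_of_pos (by linarith) (by linarith [hs2.1, hs2.2])
    · refine hGpos s3 hs3m ?_
      rw [he3]
      apply div_pos (by linarith) (by linarith)
    · refine hGneg s4 hs4m ?_
      rw [he4]
      apply div_neg_of_neg_of_pos (by linarith) (by linarith)
  · -- c < 0 : use segment (t4, ℓ)
    have ht4ℓ' : t4 < ℓ := by
      rcases lt_or_eq_of_le ht4ℓ with h | h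
      · exact h
      · exfalso; rw [h, hgℓ] at hg4; linarith
    obtain ⟨s1, hs1, he1⟩ := mvt t1 t2 h0t1 ht2ℓ h12
    obtain ⟨s2, hs2, he2⟩ := mvt t2 t3 h0t2 ht3ℓ h23
    obtain ⟨s3, hs3, he3⟩ := mvt t3 t4 h0t3 ht4ℓ h34
    obtain ⟨s4, hs4, he4⟩ := mvt t4 ℓ h0t4 le_rfl ht4ℓ'
    have hs1m : s1 ∈ Icc 0 ℓ := ⟨by linarith [hs1.1], by linarith [hs1.2]⟩
    have hs2m : s2 ∈ Icc 0 ℓ := ⟨by linarith [hs2.1], by linarith [hs2.2]⟩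
    have hs3m : s3 ∈ Icc 0 ℓ := ⟨by linarith [hs3.1], by linarith [hs3.2]⟩
    have hs4m : s4 ∈ Icc 0 ℓ := ⟨by linarith [hs4.1], hs4.2.le⟩
    have c1 : Real.cos (φ s1 - β) < 0 := by
      refine hGneg s1 hs1m ?_
      rw [he1]
      apply div_neg_of_neg_of_pos (by linarith) (by linarith)
    have c2 : 0 < Real.cos (φ s2 - β) := by
      refine hGpos s2 hs2m ?_
      rw [he2]
      apply div_pos (by linarith) (by linarith)
    have c3 : Real.cos (φ s3 - β) < 0 := by
      refine hGneg s3 hs3m ?_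
      rw [he3]
      apply div_neg_of_neg_of_pos (by linarith) (by linarith)
    have c4 : 0 < Real.cos (φ s4 - β) := by
      refine hGpos s4 hs4m ?_
      rw [he4]
      apply div_pos (by rw [hgℓ]; linarith) (by linarith [hs4.1, hs4.2])
    -- pattern -,+,-,+ : shift by π and use finish? use cos_four_alt_aux'
    have h0m : (0:ℝ) ∈ Icc 0 ℓ := ⟨le_refl _, hℓ.le⟩
    have hℓm : ℓ ∈ Icc 0 ℓ := ⟨hℓ.le, le_refl _⟩
    have hs12 : s1 ≤ s2 := by linarith [hs1.2, hs2.1]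
    have hs23 : s2 ≤ s3 := by linarith [hs2.2, hs3.1]
    have hs34 : s3 ≤ s4 := by linarith [hs3.2, hs4.1]
    rcases hmono with hm | hm
    · refine cos_four_alt_aux' (x1 := φ s1 - β) (x2 := φ s2 - β) (x3 := φ s3 - β)
        (x4 := φ s4 - β) ?_ ?_ ?_ ?_ c1 c2 c3 c4
      · linarith [hm hs1m hs2m hs12]
      · linarith [hm hs2m hs3m hs23]
      · linarith [hm hs3m hs4m hs34]
      · have h1 := hm h0m hs1m hs1m.1
        have h2 := hm hs4m hℓm hs4m.2
        have h3 : φ ℓ - φ 0 ≤ 2 * π := le_trans (le_abs_self _) hvar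
        linarith
    · have ce : ∀ s : ℝ, Real.cos (β - φ s) = Real.cos (φ s - β) := by
        intro s; rw [← Real.cos_neg, neg_sub]
      refine cos_four_alt_aux' (x1 := β - φ s1) (x2 := β - φ s2) (x3 := β - φ s3)
        (x4 := β - φ s4) ?_ ?_ ?_ ?_ ?_ ?_ ?_ ?_
      · linarith [hm hs1m hs2m hs12]
      · linarith [hm hs2m hs3m hs23]
      · linarith [hm hs3m hs4m hs34]
      · have h1 := hm h0m hs1m hs1m.1
        have h2 := hm hs4m hℓm hs4m.2
        have h3 : -(φ ℓ - φ 0) ≤ 2 * π := le_trans (neg_le_abs _) hvar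
        linarith
      · rw [ce]; exact c1
      · rw [ce]; exact c2
      · rw [ce]; exact c3
      · rw [ce]; exact c4
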